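/- Let k ≥ 3 be an integer and H a finite simple graph. Then there exists a finite simple graph G whose girth is greater than k (in particular G contains no clique on k vertices, so every colouring of G with any number of colours avoids monochromatic k-cliques) and such that there is no graph homomorphism from G to H. -/

import Mathlib

set_option maxHeartbeats 2000000

open Finset SimpleGraph Classical

noncomputable section ErdosGirth


/-- Two-term binomial lower bound. -/
lemma pow_add_le' (x y : ℕ) : ∀ q : ℕ, x ^ (q+1) + (q+1) * y * x ^ q ≤ (x + y) ^ (q+1) := by
  intro q
  induction q with
  | zero => simpa using Nat.le_refl _
  | succ q ih =>
    have h1 : (x + y) * (x ^ (q+1) + (q+1) * y * x ^ q) ≤ (x + y) ^ (q+2) := by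
      rw [pow_succ (x+y) (q+1), mul_comm ((x+y)^(q+1))]
      exact Nat.mul_le_mul_left _ ih
    refine le_trans ?_ h1
    have expand : (x + y) * (x ^ (q+1) + (q+1) * y * x ^ q)
        = x^(q+2) + (q+2)*y*x^(q+1) + (q+1)*y*y*x^q := by ring
    rw [expand]
    exact Nat.le_add_right _ _

/-- doubling step : `n^q ≥ 2 (n-r)^q` when `q*r ≥ n-r`, `q ≥ 1`. -/
lemma two_mul_sub_pow_le {n r q : ℕ} (hr : 1 ≤ r) (hrn : r ≤ n) (hq : n ≤ q * r) (hq1 : 1 ≤ q) :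
    2 * (n - r) ^ q ≤ n ^ q := by
  obtain ⟨q', rfl⟩ : ∃ q', q = q' + 1 := ⟨q - 1, by omega⟩
  have h := pow_add_le' (n - r) r q'
  have hnn : n - r + r = n := by omega
  rw [hnn] at h
  have h2 : (n - r) ^ (q'+1) + (n - r) ^ (q'+1) ≤ (n - r) ^ (q'+1) + (q'+1) * r * (n - r) ^ q' := by
    have : (n - r) ^ (q' + 1) = (n - r) * (n - r) ^ q' := by ring
    rw [this]
    have : (n - r) ≤ (q' + 1) * r := by omega
    exact Nat.add_le_add_left (Nat.mul_le_mul_right _ this) _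
  omega

/-- iterate doubling. -/
lemma two_pow_mul_sub_pow_le {n r q : ℕ} (hr : 1 ≤ r) (hrn : r ≤ n) (hq : n ≤ q * r) (hq1 : 1 ≤ q)
    (j : ℕ) : 2 ^ j * (n - r) ^ (q * j) ≤ n ^ (q * j) := by
  induction j with
  | zero => simp
  | succ j ih =>
    have key := two_mul_sub_pow_le hr hrn hq hq1
    calc 2 ^ (j+1) * (n - r) ^ (q * (j+1))
        = (2 ^ j * (n - r) ^ (q * j)) * (2 * (n - r) ^ q) := by ring
      _ ≤ n ^ (q * j) * n ^ q := Nat.mul_le_mul ih key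
      _ = n ^ (q * (j+1)) := by ring


lemma slot_count (E R : Type) [Fintype E] [DecidableEq E] [Fintype R] [DecidableEq R]
    (S : Finset E) (P : R → Prop) [DecidablePred P] :
    (univ.filter fun ω : E → R => ∀ e ∈ S, P (ω e)).card
      = (univ.filter P).card ^ S.card * (Fintype.card R) ^ (Fintype.card E - S.card) := by
  classical
  have h1 : (univ.filter fun ω : E → R => ∀ e ∈ S, P (ω e)).card
      = Fintype.card {ω : E → R // ∀ e ∈ S, P (ω e)} := by
    rw [Fintype.card_subtype]
  rw [h1]
  have e : {ω : E → R // ∀ e ∈ S, P (ω e)} ≃ (∀ _e : E, {x : R // _e ∈ S → P x}) :=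
    { toFun := fun ω e => ⟨ω.1 e, fun he => ω.2 e he⟩
      invFun := fun g => ⟨fun e => (g e).1, fun e he => (g e).2 he⟩
      left_inv := fun ω => rfl
      right_inv := fun g => rfl }
  rw [Fintype.card_congr e, Fintype.card_pi]
  have hsplit : (univ : Finset E) = S ∪ (univ \ S) := by
    rw [Finset.union_sdiff_of_subset (Finset.subset_univ S)]
  rw [hsplit, Finset.prod_union (Finset.disjoint_sdiff)]
  have hS : ∀ e ∈ S, Fintype.card {x : R // e ∈ S → P x} = (univ.filter P).card := by
    intro e he
    rw [Fintype.card_subtype]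
    congr 1
    apply Finset.filter_congr
    intro x _
    simp [he]
  have hSc : ∀ e ∈ univ \ S, Fintype.card {x : R // e ∈ S → P x} = Fintype.card R := by
    intro e he
    simp only [Finset.mem_sdiff] at he
    rw [Fintype.card_subtype]
    have : (univ.filter fun x : R => e ∈ S → P x) = univ := by
      apply Finset.filter_true_of_mem
      intro x _ hc
      exact absurd hc he.2
    rw [this, Finset.card_univ]
  rw [Finset.prod_congr rfl hS, Finset.prod_congr rfl hSc, Finset.prod_const, Finset.prod_const,
    Finset.card_sdiff_of_subset (Finset.subset_univ S), Finset.card_univ]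


lemma card_filter_val_lt (n r : ℕ) (hr : r ≤ n) :
    (univ.filter fun x : Fin n => x.val < r).card = r := by
  have : (univ.filter fun x : Fin n => x.val < r) = Finset.map (Fin.castLEEmb hr) univ := by
    ext x
    simp only [Finset.mem_filter, Finset.mem_univ, true_and, Finset.mem_map]
    constructor
    · intro hx; exact ⟨⟨x.val, hx⟩, by ext; simp⟩
    · rintro ⟨y, -, rfl⟩; simpa using y.isLt
  rw [this, Finset.card_map, Finset.card_univ, Fintype.card_fin]

lemma card_filter_le_val (n r : ℕ) (hr : r ≤ n) :
    (univ.filter fun x : Fin n => r ≤ x.val).card = n - r := by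
  have h := Finset.card_filter_add_card_filter_not (s := (univ : Finset (Fin n)))
    (p := fun x : Fin n => x.val < r)
  have h2 : (univ.filter fun x : Fin n => ¬ x.val < r) = (univ.filter fun x : Fin n => r ≤ x.val) := by
    apply Finset.filter_congr; intro x _; simp [Nat.not_lt]
  rw [card_filter_val_lt n r hr, h2, Finset.card_univ, Fintype.card_fin] at h
  omega

-- monotone slot-power bound
lemma pow_slot_mono (d t M m s : ℕ) (hd : d ≤ t) (hms : m ≤ s) (hsM : s ≤ M) :
    d ^ s * t ^ (M - s) ≤ d ^ m * t ^ (M - m) := by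
  calc d ^ s * t ^ (M - s) = d ^ m * (d ^ (s - m) * t ^ (M - s)) := by
        rw [← mul_assoc, ← pow_add]; congr 2; omega
    _ ≤ d ^ m * (t ^ (s - m) * t ^ (M - s)) :=
        Nat.mul_le_mul_left _ (Nat.mul_le_mul_right _ (Nat.pow_le_pow_left hd _))
    _ = d ^ m * t ^ (M - m) := by rw [← pow_add, show s - m + (M - s) = M - m by omega]


lemma getVert_eq_support_getElem {V : Type} {G : SimpleGraph V} {u v : V}
    (p : G.Walk u v) (i : ℕ) (hi : i ≤ p.length) :
    p.getVert i = p.support[i]'(by rw [Walk.length_support]; omega) := by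
  induction p generalizing i with
  | nil => simp only [Walk.length_nil, Nat.le_zero] at hi; subst hi; simp
  | cons h q ih =>
    cases i with
    | zero => simp [Walk.getVert]
    | succ i =>
      simp only [Walk.length_cons] at hi
      rw [Walk.getVert_cons_succ, ih i (by omega)]
      simp

lemma cycle_getVert_inj {V : Type} {G : SimpleGraph V} {u : V}
    {w : G.Walk u u} (hw : w.IsCycle) {i j : ℕ} (hi : i < w.length) (hj : j < w.length)
    (h : w.getVert i = w.getVert j) : i = j := by
  have hnodup := hw.support_nodup
  have hlen : w.support.length = w.length + 1 := Walk.length_support w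
  have htail : w.support.tail.length = w.length := by
    rw [List.length_tail, hlen]; omega
  have hl3 := hw.three_le_length
  have key : ∀ m : ℕ, 1 ≤ m → ∀ _h2 : m ≤ w.length,
      w.getVert m = w.support.tail[m-1]'(by rw [htail]; omega) := by
    intro m h1 h2
    rw [getVert_eq_support_getElem w m h2, List.getElem_tail]
    congr 1
    omega
  have inj1 : ∀ i j : ℕ, 1 ≤ i → i ≤ w.length → 1 ≤ j → j ≤ w.length →
      w.getVert i = w.getVert j → i = j := by
    intro i j h1 h2 h3 h4 heq
    rw [key i h1 h2, key j h3 h4] at heq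
    have := (List.Nodup.getElem_inj_iff hnodup).mp heq
    omega
  rcases Nat.eq_zero_or_pos i with hi0 | hip <;> rcases Nat.eq_zero_or_pos j with hj0 | hjp
  · omega
  · exfalso
    subst hi0
    have h' : w.getVert w.length = w.getVert j := by
      rw [Walk.getVert_length]; exact (Walk.getVert_zero w).symm.trans h
    have := inj1 w.length j (by omega) le_rfl hjp (by omega) h'
    omega
  · exfalso
    subst hj0
    have h' : w.getVert i = w.getVert w.length := by
      rw [Walk.getVert_length]; exact h.trans (Walk.getVert_zero w)
    have := inj1 i w.length hip (by omega) (by omega) le_rfl h'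
    omega
  · exact inj1 i j hip (by omega) hjp (by omega) h


def egG (n r : ℕ) (ω : Sym2 (Fin n) → Fin n) : SimpleGraph (Fin n) where
  Adj a b := a ≠ b ∧ ((ω s(a,b)) : ℕ) < r
  symm := by
    constructor
    intro a b h
    refine ⟨h.1.symm, ?_⟩
    rw [Sym2.eq_swap]
    exact h.2
  loopless := ⟨fun a h => h.1 rfl⟩

def GoodT (n r l : ℕ) (ω : Sym2 (Fin n) → Fin n) (f : ZMod (l+3) → Fin n) : Prop :=
  Function.Injective f ∧ ∀ i : ZMod (l+3), (egG n r ω).Adj (f i) (f (i+1))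

def goodF (n r l : ℕ) (ω : Sym2 (Fin n) → Fin n) : Finset (ZMod (l+3) → Fin n) :=
  univ.filter (GoodT n r l ω)

lemma two_ne_zero_zmod (m : ℕ) (hm : 3 ≤ m) : (2 : ZMod m) ≠ 0 := by
  intro h
  have h2 : ((2 : ℕ) : ZMod m) = 0 := by push_cast; exact h
  have := Nat.le_of_dvd (by norm_num) ((ZMod.natCast_eq_zero_iff 2 m).mp h2)
  omega

lemma one_ne_zero_zmod (m : ℕ) (hm : 3 ≤ m) : (1 : ZMod m) ≠ 0 := by
  intro h
  have h2 : ((1 : ℕ) : ZMod m) = 0 := by push_cast; exact h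
  have := Nat.le_of_dvd (by norm_num) ((ZMod.natCast_eq_zero_iff 1 m).mp h2)
  omega

lemma edge_map_inj (n l : ℕ) (f : ZMod (l+3) → Fin n) (hf : Function.Injective f) :
    Function.Injective (fun i : ZMod (l+3) => s(f i, f (i+1))) := by
  intro i j hij
  simp only [Sym2.eq, Sym2.rel_iff', Prod.mk.injEq, Prod.swap_prod_mk] at hij
  rcases hij with ⟨h1, _⟩ | ⟨h1, h2⟩
  · exact hf h1
  · exfalso
    have e1 : i = j + 1 := hf h1
    have e2 : i + 1 = j := hf h2
    have : (2 : ZMod (l+3)) = 0 := by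
      have : i = i + 2 := by
        calc i = j + 1 := e1
          _ = (i + 1) + 1 := by rw [e2]
          _ = i + 2 := by ring
      have := left_eq_add.mp this
      exact this
    exact two_ne_zero_zmod (l+3) (by omega) this

lemma sum_goodF_card_le (n r l : ℕ) (hr : r ≤ n) :
    ∑ ω : Sym2 (Fin n) → Fin n, (goodF n r l ω).card
      ≤ n ^ (l+3) * (r ^ (l+3) * n ^ (Fintype.card (Sym2 (Fin n)) - (l+3))) := by
  have swap : ∑ ω : Sym2 (Fin n) → Fin n, (goodF n r l ω).card
      = ∑ f : ZMod (l+3) → Fin n, (univ.filter fun ω : Sym2 (Fin n) → Fin n => GoodT n r l ω f).card := by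
    simp only [goodF, Finset.card_filter]
    rw [Finset.sum_comm]
  rw [swap]
  have bound : ∀ f : ZMod (l+3) → Fin n,
      (univ.filter fun ω : Sym2 (Fin n) → Fin n => GoodT n r l ω f).card
        ≤ r ^ (l+3) * n ^ (Fintype.card (Sym2 (Fin n)) - (l+3)) := by
    intro f
    by_cases hf : Function.Injective f
    · set Sf : Finset (Sym2 (Fin n)) := univ.image (fun i : ZMod (l+3) => s(f i, f (i+1))) with hSf
      have hcard : Sf.card = l + 3 := by
        rw [hSf, Finset.card_image_of_injective _ (edge_map_inj n l f hf), Finset.card_univ,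
          ZMod.card]
      have hsub : (univ.filter fun ω : Sym2 (Fin n) → Fin n => GoodT n r l ω f)
          ⊆ (univ.filter fun ω : Sym2 (Fin n) → Fin n => ∀ e ∈ Sf, (ω e : ℕ) < r) := by
        intro ω hω
        simp only [Finset.mem_filter, Finset.mem_univ, true_and] at hω ⊢
        intro e he
        rw [hSf] at he
        simp only [Finset.mem_image, Finset.mem_univ, true_and] at he
        obtain ⟨i, rfl⟩ := he
        exact (hω.2 i).2
      calc (univ.filter fun ω : Sym2 (Fin n) → Fin n => GoodT n r l ω f).card
          ≤ (univ.filter fun ω : Sym2 (Fin n) → Fin n => ∀ e ∈ Sf, (ω e : ℕ) < r).card :=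
            Finset.card_le_card hsub
        _ = (univ.filter fun x : Fin n => (x : ℕ) < r).card ^ Sf.card
              * n ^ (Fintype.card (Sym2 (Fin n)) - Sf.card) := by
            have := slot_count (Sym2 (Fin n)) (Fin n) Sf (fun x : Fin n => (x : ℕ) < r)
            simpa using this
        _ = r ^ (l+3) * n ^ (Fintype.card (Sym2 (Fin n)) - (l+3)) := by
            rw [card_filter_val_lt n r hr, hcard]
    · have hempty : (univ.filter fun ω : Sym2 (Fin n) → Fin n => GoodT n r l ω f) = ∅ := by
        apply Finset.filter_false_of_mem
        intro ω _ hg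
        exact hf hg.1
      rw [hempty]
      simp
  calc ∑ f : ZMod (l+3) → Fin n, (univ.filter fun ω : Sym2 (Fin n) → Fin n => GoodT n r l ω f).card
      ≤ ∑ _f : ZMod (l+3) → Fin n, (r ^ (l+3) * n ^ (Fintype.card (Sym2 (Fin n)) - (l+3))) :=
        Finset.sum_le_sum (fun f _ => bound f)
    _ = n ^ (l+3) * (r ^ (l+3) * n ^ (Fintype.card (Sym2 (Fin n)) - (l+3))) := by
        rw [Finset.sum_const, Finset.card_univ, Fintype.card_fun, ZMod.card, Fintype.card_fin,
          smul_eq_mul]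

lemma indep_event_card_le (n r a : ℕ) (hr : r ≤ n) (A : Finset (Fin n)) (hA : A.card = a) :
    (univ.filter fun ω : Sym2 (Fin n) → Fin n =>
        ∀ x ∈ A, ∀ y ∈ A, x ≠ y → ¬ (egG n r ω).Adj x y).card
      ≤ (n - r) ^ (a * (a-1) / 2) * n ^ (Fintype.card (Sym2 (Fin n)) - a * (a-1) / 2) := by
  set SA : Finset (Sym2 (Fin n)) := A.offDiag.image (fun p => s(p.1, p.2)) with hSA
  have hfib : ∀ e ∈ SA, (A.offDiag.filter fun p => s(p.1, p.2) = e).card ≤ 2 := by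
    intro e he
    induction e with
    | _ x y =>
      have hsub : (A.offDiag.filter fun p => s(p.1, p.2) = s(x, y)) ⊆ {(x, y), (y, x)} := by
        intro p hp
        simp only [Finset.mem_filter] at hp
        have := hp.2
        rw [Sym2.eq_iff] at this
        simp only [Finset.mem_insert, Finset.mem_singleton]
        rcases this with ⟨h1, h2⟩ | ⟨h1, h2⟩
        · left; exact Prod.ext h1 h2
        · right; exact Prod.ext h1 h2
      calc (A.offDiag.filter fun p => s(p.1, p.2) = s(x, y)).card
          ≤ ({(x, y), (y, x)} : Finset (Fin n × Fin n)).card := Finset.card_le_card hsub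
        _ ≤ 2 := Finset.card_insert_le _ _ |>.trans (by simp)
  have hcard_lb : a * (a - 1) / 2 ≤ SA.card := by
    have h1 : A.offDiag.card ≤ 2 * SA.card := Finset.card_le_mul_card_image _ 2 hfib
    have h2 : A.offDiag.card = a * a - a := by rw [Finset.offDiag_card, hA]
    have h3 : a * (a-1) / 2 * 2 ≤ a * a - a := by
      have h4 : a * (a - 1) = a * a - a := by
        cases a with
        | zero => rfl
        | succ b =>
          simp only [Nat.succ_sub_one, Nat.mul_succ]
          omega
      calc a * (a-1) / 2 * 2 ≤ a * (a - 1) := Nat.div_mul_le_self _ 2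
        _ ≤ a * a - a := le_of_eq h4
    omega
  have hsub2 : (univ.filter fun ω : Sym2 (Fin n) → Fin n =>
        ∀ x ∈ A, ∀ y ∈ A, x ≠ y → ¬ (egG n r ω).Adj x y)
      ⊆ (univ.filter fun ω : Sym2 (Fin n) → Fin n => ∀ e ∈ SA, r ≤ (ω e : ℕ)) := by
    intro ω hω
    simp only [Finset.mem_filter, Finset.mem_univ, true_and] at hω ⊢
    intro e he
    rw [hSA] at he
    simp only [Finset.mem_image, Finset.mem_offDiag] at he
    obtain ⟨p, ⟨hx, hy, hne⟩, rfl⟩ := he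
    have hnadj := hω p.1 hx p.2 hy hne
    by_contra hlt
    exact hnadj ⟨hne, by omega⟩
  calc (univ.filter fun ω : Sym2 (Fin n) → Fin n =>
        ∀ x ∈ A, ∀ y ∈ A, x ≠ y → ¬ (egG n r ω).Adj x y).card
      ≤ (univ.filter fun ω : Sym2 (Fin n) → Fin n => ∀ e ∈ SA, r ≤ (ω e : ℕ)).card :=
        Finset.card_le_card hsub2
    _ = (univ.filter fun x : Fin n => r ≤ (x : ℕ)).card ^ SA.card
          * n ^ (Fintype.card (Sym2 (Fin n)) - SA.card) := by
        have := slot_count (Sym2 (Fin n)) (Fin n) SA (fun x : Fin n => r ≤ (x : ℕ))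
        simpa using this
    _ = (n - r) ^ SA.card * n ^ (Fintype.card (Sym2 (Fin n)) - SA.card) := by
        rw [card_filter_le_val n r hr]
    _ ≤ (n - r) ^ (a * (a-1) / 2) * n ^ (Fintype.card (Sym2 (Fin n)) - a * (a-1) / 2) :=
        pow_slot_mono (n - r) n _ _ _ (by omega) hcard_lb (Finset.card_le_univ _)

def XT (n r k : ℕ) (ω : Sym2 (Fin n) → Fin n) : ℕ := ∑ l ∈ range (k-2), (goodF n r l ω).card
def DT (n r k : ℕ) (ω : Sym2 (Fin n) → Fin n) : Finset (Fin n) :=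
  (range (k-2)).biUnion (fun l => (goodF n r l ω).image (fun f => f 0))

/-- Existence of a good outcome. -/
lemma exists_good_omega (k : ℕ) (hk : 3 ≤ k) (c : ℕ) (hc : 1 ≤ c) :
    ∃ ω : Sym2 (Fin ((64*c*c*(k+1)) ^ (2*k))) → Fin ((64*c*c*(k+1)) ^ (2*k)),
      XT ((64*c*c*(k+1)) ^ (2*k)) (64*c*c*(k+1)) k ω ≤ 2 * k * (64*c*c*(k+1)) ^ k ∧
      ¬ ∃ A : Finset (Fin ((64*c*c*(k+1)) ^ (2*k))),
          A.card = ((64*c*c*(k+1)) ^ (2*k)) / (2*c) ∧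
          ∀ x ∈ A, ∀ y ∈ A, x ≠ y →
            ¬ (egG ((64*c*c*(k+1)) ^ (2*k)) (64*c*c*(k+1)) ω).Adj x y := by
  set r : ℕ := 64*c*c*(k+1) with hrdef
  set n : ℕ := r ^ (2*k) with hndef
  set a : ℕ := n / (2*c) with hadef
  set m : ℕ := a * (a-1) / 2 with hmdef
  set M : ℕ := Fintype.card (Sym2 (Fin n)) with hMdef
  -- basic bounds
  have hcc : 64 * c * c ≤ r := by
    rw [hrdef]; calc 64*c*c = 64*c*c*1 := by ring
      _ ≤ 64*c*c*(k+1) := Nat.mul_le_mul_left _ (by omega)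
  have hc64 : 64 ≤ 64 * c * c := by nlinarith
  have hr64 : 64 ≤ r := le_trans hc64 hcc
  have hrk : 4*k + 2 ≤ r := by
    rw [hrdef]
    calc 4*k+2 ≤ 64*(k+1) := by omega
      _ = 64*1*1*(k+1) := by ring
      _ ≤ 64*c*c*(k+1) := by
          apply Nat.mul_le_mul_right
          apply Nat.mul_le_mul (Nat.mul_le_mul_left _ hc) hc
  have hrn : r ≤ n := by
    rw [hndef]
    exact Nat.le_self_pow (by omega) r
  have hrltn : r < n := by
    rw [hndef]
    calc r < r * r := by nlinarith
      _ = r ^ 2 := by ring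
      _ ≤ r ^ (2*k) := Nat.pow_le_pow_right (by omega) (by omega)
  have hn1 : 1 ≤ n := by omega
  have hnM : n ≤ M := by
    rw [hMdef]
    have : Function.Injective (fun x : Fin n => s(x, x)) := by
      intro x y hxy
      rw [Sym2.eq_iff] at hxy
      tauto
    simpa using Fintype.card_le_of_injective _ this
  have hkM : k ≤ M := le_trans (by omega) hnM
  -- facts about a
  have h2ca : 2*c*a ≤ n := by
    rw [hadef, mul_comm]
    exact Nat.div_mul_le_self n (2*c)
  have h8c : 8*c ≤ n := by
    have h1 : 8*c ≤ 64*c*c := by nlinarith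
    exact le_trans h1 (le_trans hcc hrn)
  have ha_lb : n + 2 ≤ 4*(c*a) := by
    have hdm := Nat.div_add_mod n (2*c)
    have hmod : n % (2*c) < 2*c := Nat.mod_lt n (by omega)
    rw [hadef]
    set X := c * (n / (2*c)) with hX
    have h2 : 2*c*(n/(2*c)) = 2*X := by rw [hX]; ring
    omega
  have ha2 : 2 ≤ a := by
    by_contra hlt
    push_neg at hlt
    have h1 : c * a ≤ c * 1 := Nat.mul_le_mul_left c (by omega)
    omega
  have ha_le_n : a ≤ n := by
    have h1 : a ≤ 2*c*a := by nlinarith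
    omega
  -- expectation of the number of short cyclic tuples
  set K : ℕ := k * r^k with hKdef
  have hK1 : 1 ≤ K := by
    have : 1 ≤ r^k := Nat.one_le_pow _ _ (by omega)
    rw [hKdef]; nlinarith
  have hSX : ∑ ω : Sym2 (Fin n) → Fin n, XT n r k ω ≤ K * n^M := by
    unfold XT
    rw [Finset.sum_comm]
    calc ∑ l ∈ range (k-2), ∑ ω : Sym2 (Fin n) → Fin n, (goodF n r l ω).card
        ≤ ∑ l ∈ range (k-2), n^(l+3) * (r^(l+3) * n^(M - (l+3))) :=
          Finset.sum_le_sum fun l _ => sum_goodF_card_le n r l hrn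
      _ ≤ ∑ _l ∈ range (k-2), r^k * n^M := by
          apply Finset.sum_le_sum
          intro l hl
          have hl3 : l + 3 ≤ k := by
            simp only [Finset.mem_range] at hl; omega
          have hlM : l + 3 ≤ M := le_trans hl3 hkM
          have heq : n^(l+3) * (r^(l+3) * n^(M-(l+3))) = r^(l+3) * n^M := by
            calc n^(l+3) * (r^(l+3) * n^(M-(l+3)))
                = r^(l+3) * (n^(l+3) * n^(M-(l+3))) := by ring
              _ = r^(l+3) * n^((l+3) + (M-(l+3))) := by rw [pow_add n (l+3) (M-(l+3))]
              _ = r^(l+3) * n^M := by rw [show (l+3) + (M-(l+3)) = M from by omega]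
          rw [heq]
          exact Nat.mul_le_mul_right _ (Nat.pow_le_pow_right (by omega) hl3)
      _ = (k-2) * (r^k * n^M) := by rw [Finset.sum_const, Finset.card_range, smul_eq_mul]
      _ ≤ K * n^M := by
          rw [hKdef, mul_assoc]
          exact Nat.mul_le_mul_right _ (by omega)
  -- Markov for bad1
  set bad1 : Finset (Sym2 (Fin n) → Fin n) :=
    univ.filter (fun ω => 2*K + 1 ≤ XT n r k ω) with hbad1def
  have hnM1 : 1 ≤ n^M := Nat.one_le_pow _ _ (by omega)
  have hb1 : bad1.card * (2*K+1) ≤ K * n^M := by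
    calc bad1.card * (2*K+1) = bad1.card • (2*K+1) := by rw [smul_eq_mul]
      _ ≤ ∑ ω ∈ bad1, XT n r k ω :=
          Finset.card_nsmul_le_sum _ _ _ (fun ω hω => (Finset.mem_filter.mp hω).2)
      _ ≤ ∑ ω : Sym2 (Fin n) → Fin n, XT n r k ω :=
          Finset.sum_le_sum_of_subset (Finset.filter_subset _ _)
      _ ≤ K * n^M := hSX
  have hb1' : 2 * bad1.card < n^M := by
    by_contra hcon
    push_neg at hcon
    have e1 : bad1.card * (2*K+1) = 2*bad1.card*K + bad1.card := by ring
    have e2 : K * n^M ≤ K * (2*bad1.card) := Nat.mul_le_mul_left K hcon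
    have e3 : K * (2*bad1.card) = 2*bad1.card*K := by ring
    omega
  -- bad2 : outcomes with an independent set of size a
  set bad2 : Finset (Sym2 (Fin n) → Fin n) :=
    univ.filter (fun ω => ∃ A : Finset (Fin n), A.card = a ∧
      ∀ x ∈ A, ∀ y ∈ A, x ≠ y → ¬ (egG n r ω).Adj x y) with hbad2def
  have hb2 : bad2.card ≤ n.choose a * ((n-r)^m * n^(M-m)) := by
    have hsub : bad2 ⊆ (powersetCard a (univ : Finset (Fin n))).biUnion
        (fun A => univ.filter (fun ω : Sym2 (Fin n) → Fin n =>
          ∀ x ∈ A, ∀ y ∈ A, x ≠ y → ¬ (egG n r ω).Adj x y)) := by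
      intro ω hω
      rw [hbad2def, Finset.mem_filter] at hω
      obtain ⟨-, A, hA, hind⟩ := hω
      exact Finset.mem_biUnion.mpr ⟨A, Finset.mem_powersetCard.mpr ⟨Finset.subset_univ _, hA⟩,
        Finset.mem_filter.mpr ⟨Finset.mem_univ _, hind⟩⟩
    calc bad2.card ≤ ((powersetCard a (univ : Finset (Fin n))).biUnion
        (fun A => univ.filter (fun ω : Sym2 (Fin n) → Fin n =>
          ∀ x ∈ A, ∀ y ∈ A, x ≠ y → ¬ (egG n r ω).Adj x y))).card :=
          Finset.card_le_card hsub
      _ ≤ ∑ A ∈ powersetCard a (univ : Finset (Fin n)),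
            (univ.filter (fun ω : Sym2 (Fin n) → Fin n =>
              ∀ x ∈ A, ∀ y ∈ A, x ≠ y → ¬ (egG n r ω).Adj x y)).card :=
          Finset.card_biUnion_le
      _ ≤ ∑ _A ∈ powersetCard a (univ : Finset (Fin n)), (n-r)^m * n^(M-m) := by
          apply Finset.sum_le_sum
          intro A hA
          have hAa : A.card = a := (Finset.mem_powersetCard.mp hA).2
          exact indep_event_card_le n r a hrn A hAa
      _ = n.choose a * ((n-r)^m * n^(M-m)) := by
          rw [Finset.sum_const, Finset.card_powersetCard, Finset.card_univ, Fintype.card_fin,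
            smul_eq_mul]
  have hchoose : n.choose a ≤ 2^n := by
    calc n.choose a ≤ ∑ i ∈ range (n+1), n.choose i :=
        Finset.single_le_sum (fun i _ => Nat.zero_le _)
          (by simp [Finset.mem_range, Nat.lt_succ_iff, ha_le_n])
      _ = 2 ^ n := Nat.sum_range_choose n
  have hmM : m ≤ M := by
    have hM2 : M = (n+1).choose 2 := by
      rw [hMdef, Sym2.card, Fintype.card_fin]
    have hch : (n+1).choose 2 = (n+1)*n/2 := by
      rw [Nat.choose_two_right]
      simp
    have hle : a*(a-1) ≤ (n+1)*n := Nat.mul_le_mul (by omega) (by omega)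
    rw [hM2, hch, hmdef]
    exact Nat.div_le_div_right hle
  -- the exponential bound
  set q : ℕ := r^(2*k-1) with hqdef
  have hqr : q * r = n := by
    rw [hqdef, hndef, ← pow_succ]
    congr 1
    omega
  have hq1 : 1 ≤ q := Nat.one_le_pow _ _ (by omega)
  have h2m : 2*m = a*(a-1) := by
    have heven : 2 ∣ a*(a-1) := by
      have := Nat.even_mul_succ_self (a-1)
      rw [show a - 1 + 1 = a from by omega] at this
      rw [mul_comm]
      exact this.two_dvd
    rw [hmdef]
    exact Nat.mul_div_cancel' heven
  have hqm : q*(n+2) ≤ m := by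
    have step : 64*c*c*(q*(n+2)) ≤ 64*c*c*m := by
      calc 64*c*c*(q*(n+2)) ≤ r * (q*(n+2)) := Nat.mul_le_mul_right _ hcc
        _ = (q*r)*(n+2) := by ring
        _ = n*(n+2) := by rw [hqr]
        _ ≤ (n+2)*(n+2) := Nat.mul_le_mul_right _ (by omega)
        _ ≤ (4*(c*a))*(4*(c*a)) := Nat.mul_le_mul ha_lb ha_lb
        _ = 16*c*c*(a*a) := by ring
        _ ≤ 16*c*c*(2*(a*(a-1))) := by
            apply Nat.mul_le_mul_left
            have : a ≤ 2*(a-1) := by omega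
            calc a*a ≤ a*(2*(a-1)) := Nat.mul_le_mul_left _ this
              _ = 2*(a*(a-1)) := by ring
        _ = 16*c*c*(2*(2*m)) := by rw [h2m]
        _ = 64*c*c*m := by ring
    exact Nat.le_of_mul_le_mul_left step (by omega)
  have hcore : 2 * (2^n * ((n-r)^m * n^(M-m))) < n^M := by
    have h1 : 2^(n+2) * (n-r)^(q*(n+2)) ≤ n^(q*(n+2)) :=
      two_pow_mul_sub_pow_le (by omega) (le_of_lt hrltn) (le_of_eq hqr.symm) hq1 (n+2)
    have key : 4*2^n * (n-r)^m ≤ n^m := by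
      calc 4*2^n * (n-r)^m = 2^(n+2) * ((n-r)^(q*(n+2)) * (n-r)^(m - q*(n+2))) := by
            rw [← pow_add (n-r) (q*(n+2)) (m - q*(n+2)),
              show q*(n+2) + (m - q*(n+2)) = m from by omega,
              pow_add 2 n 2]
            ring
        _ = (2^(n+2) * (n-r)^(q*(n+2))) * (n-r)^(m - q*(n+2)) := by ring
        _ ≤ n^(q*(n+2)) * n^(m - q*(n+2)) :=
            Nat.mul_le_mul h1 (Nat.pow_le_pow_left (by omega) _)
        _ = n^m := by
            rw [← pow_add n (q*(n+2)) (m - q*(n+2)),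
              show q*(n+2) + (m - q*(n+2)) = m from by omega]
    have hpos : 1 ≤ 2^n * (n-r)^m := by
      have h2 : 1 ≤ 2^n := Nat.one_le_pow _ _ (by omega)
      have h3 : 1 ≤ (n-r)^m := Nat.one_le_pow _ _ (by omega)
      nlinarith
    have hstrict : 2 * (2^n * (n-r)^m) < 4*2^n * (n-r)^m := by
      have e : 4*2^n*(n-r)^m = 2*(2^n*(n-r)^m) + 2*(2^n*(n-r)^m) := by ring
      omega
    calc 2 * (2^n * ((n-r)^m * n^(M-m))) = (2*(2^n*(n-r)^m)) * n^(M-m) := by ring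
      _ < (4*2^n * (n-r)^m) * n^(M-m) := by
          apply Nat.mul_lt_mul_of_lt_of_le hstrict (le_refl _)
          exact Nat.one_le_pow _ _ (by omega)
      _ ≤ n^m * n^(M-m) := Nat.mul_le_mul_right _ key
      _ = n^M := by
          rw [← pow_add n m (M-m), show m + (M-m) = M from by omega]
  have hb2' : 2 * bad2.card < n^M := by
    calc 2 * bad2.card ≤ 2 * (n.choose a * ((n-r)^m * n^(M-m))) := by omega
      _ ≤ 2 * (2^n * ((n-r)^m * n^(M-m))) := by
          have := Nat.mul_le_mul_right ((n-r)^m * n^(M-m)) hchoose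
          omega
      _ < n^M := hcore
  -- existence of a good outcome
  have hcardΩ : Fintype.card (Sym2 (Fin n) → Fin n) = n^M := by
    rw [Fintype.card_fun, Fintype.card_fin, hMdef]
  obtain ⟨ω, hω⟩ : ∃ ω, ω ∉ bad1 ∪ bad2 := by
    by_contra hall
    push_neg at hall
    have hsub : (univ : Finset (Sym2 (Fin n) → Fin n)) ⊆ bad1 ∪ bad2 := fun ω _ => hall ω
    have hcard := Finset.card_le_card hsub
    rw [Finset.card_univ, hcardΩ] at hcard
    have := Finset.card_union_le bad1 bad2
    omega
  rw [Finset.mem_union, not_or] at hω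
  refine ⟨ω, ?_, ?_⟩
  · have h1 := hω.1
    rw [hbad1def, Finset.mem_filter] at h1
    push_neg at h1
    have h2 := h1 (Finset.mem_univ _)
    have e : 2 * K = 2 * k * r^k := by rw [hKdef]; ring
    omega
  · intro hA
    apply hω.2
    rw [hbad2def, Finset.mem_filter]
    exact ⟨Finset.mem_univ _, hA⟩

/-- For every `k ≥ 3` and every finite simple graph `H`, there is a finite simple graph `G`
of girth greater than `k` admitting no graph homomorphism to `H`. -/
theorem high_girth_no_hom (k : ℕ) (hk : 3 ≤ k) {W : Type*} [Fintype W]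
    (H : SimpleGraph W) :
    ∃ (V : Type) (_ : Fintype V) (G : SimpleGraph V),
      (k : ℕ∞) < G.egirth ∧ IsEmpty (G →g H) := by
  classical
  obtain ⟨c, hcdef⟩ : ∃ c : ℕ, c = Fintype.card W + 1 := ⟨_, rfl⟩
  obtain ⟨r, hrdef⟩ : ∃ r : ℕ, r = 64*c*c*(k+1) := ⟨_, rfl⟩
  obtain ⟨n, hndef⟩ : ∃ n : ℕ, n = r^(2*k) := ⟨_, rfl⟩
  obtain ⟨ω, hX, hind⟩ : ∃ ω : Sym2 (Fin n) → Fin n, XT n r k ω ≤ 2*k*r^k ∧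
      ¬ ∃ A : Finset (Fin n), A.card = n/(2*c) ∧
        ∀ x ∈ A, ∀ y ∈ A, x ≠ y → ¬ (egG n r ω).Adj x y := by
    subst hndef
    subst hrdef
    exact exists_good_omega k hk c (by omega)
  obtain ⟨a, hadef⟩ : ∃ a : ℕ, a = n/(2*c) := ⟨_, rfl⟩
  rw [← hadef] at hind
  -- arithmetic facts
  have hc1 : 1 ≤ c := by omega
  have hrk : 4*k + 2 ≤ r := by
    rw [hrdef]
    calc 4*k+2 ≤ 64*(k+1) := by omega
      _ = 64*1*1*(k+1) := by ring
      _ ≤ 64*c*c*(k+1) := by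
          apply Nat.mul_le_mul_right
          exact Nat.mul_le_mul (Nat.mul_le_mul_left _ hc1) hc1
  have hr2 : 2 ≤ r := by omega
  have hrn : r ≤ n := by rw [hndef]; exact Nat.le_self_pow (by omega) r
  have h2ca : 2*c*a ≤ n := by
    rw [hadef, mul_comm]; exact Nat.div_mul_le_self n (2*c)
  have hrkk : 2*(2*k*r^k) + 2 ≤ n := by
    have h1 : r^k * r^k = n := by rw [hndef, ← pow_add]; congr 1; omega
    have h2 : (4*k+2) * r^k ≤ r * r^k := Nat.mul_le_mul_right _ hrk
    have h3 : r * r^k ≤ r^k * r^k := Nat.mul_le_mul_right _ (Nat.le_self_pow (by omega) r)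
    have h4 : 1 ≤ r^k := Nat.one_le_pow _ _ (by omega)
    nlinarith
  -- the deleted set
  set D : Finset (Fin n) := DT n r k ω with hDdef
  have hD : D.card ≤ XT n r k ω := by
    rw [hDdef]
    calc (DT n r k ω).card ≤ ∑ l ∈ range (k-2), ((goodF n r l ω).image (fun f => f 0)).card :=
          Finset.card_biUnion_le
      _ ≤ ∑ l ∈ range (k-2), (goodF n r l ω).card :=
          Finset.sum_le_sum (fun l _ => Finset.card_image_le)
      _ = XT n r k ω := rfl
  set Vs : Finset (Fin n) := univ \ D with hVsdef
  have hVscard : n - 2*k*r^k ≤ Vs.card := by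
    rw [hVsdef, Finset.card_sdiff_of_subset (Finset.subset_univ D), Finset.card_univ, Fintype.card_fin]
    have e1 : 2*(2*k*r^k) = 2*(2*k)*(r^k) := by ring
    omega
  refine ⟨{x : Fin n // x ∈ Vs}, inferInstance, (egG n r ω).comap Subtype.val, ?_, ?_⟩
  · -- girth
    set G' := (egG n r ω).comap (Subtype.val : {x : Fin n // x ∈ Vs} → Fin n) with hG'def
    have hgirth : ((k+1 : ℕ) : ℕ∞) ≤ G'.egirth := by
      rw [le_egirth]
      intro u w hcyc
      rcases le_or_gt ((k:ℕ)+1) w.length with hlen | hlen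
      · exact_mod_cast Nat.cast_le.mpr hlen
      · exfalso
        have h3 := hcyc.three_le_length
        set l : ℕ := w.length - 3 with hldef
        have hwlen : w.length = l + 3 := by omega
        have hlrange : l ∈ range (k-2) := by
          rw [Finset.mem_range]; omega
        haveI : NeZero (l+3) := ⟨by omega⟩
        set f : ZMod (l+3) → Fin n := fun i => (w.getVert i.val).val with hfdef
        have hvlt : ∀ i : ZMod (l+3), i.val < w.length := by
          intro i; rw [hwlen]; exact ZMod.val_lt i
        have hgood : GoodT n r l ω f := by
          constructor
          · intro i j hij
            rw [hfdef] at hij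
            have := cycle_getVert_inj hcyc (hvlt i) (hvlt j) (Subtype.val_injective hij)
            exact ZMod.val_injective _ this
          · intro i
            have hadj : G'.Adj (w.getVert i.val) (w.getVert (i.val + 1)) :=
              w.adj_getVert_succ (hvlt i)
            have hkey : w.getVert ((i+1).val) = w.getVert (i.val + 1) := by
              haveI : Fact (1 < l + 3) := ⟨by omega⟩
              have hval : (i+1).val = (i.val + 1) % (l+3) := by
                rw [ZMod.val_add, ZMod.val_one]
              rcases lt_or_ge (i.val + 1) (l+3) with hlt | hge
              · rw [hval, Nat.mod_eq_of_lt hlt]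
              · have hiv : i.val = l + 2 := by have := ZMod.val_lt i; omega
                have h0 : (i+1).val = 0 := by
                  rw [hval, hiv, show l + 2 + 1 = l + 3 from rfl, Nat.mod_self]
                rw [h0, Walk.getVert_zero, hiv, show l + 2 + 1 = l + 3 from rfl, ← hwlen,
                  Walk.getVert_length]
            have hfi1 : f (i+1) = (w.getVert (i.val + 1)).val := congrArg Subtype.val hkey
            rw [hfi1]
            exact hadj
        have hmem : f 0 ∈ D := by
          rw [hDdef, DT, Finset.mem_biUnion]
          refine ⟨l, hlrange, ?_⟩
          rw [Finset.mem_image]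
          refine ⟨f, ?_, rfl⟩
          rw [goodF, Finset.mem_filter]
          exact ⟨Finset.mem_univ _, hgood⟩
        have hf0 : f 0 = (w.getVert 0).val := by
          show (w.getVert (0 : ZMod (l+3)).val).val = (w.getVert 0).val
          rw [ZMod.val_zero]
        have hprop : (w.getVert 0).val ∈ (univ \ D : Finset (Fin n)) := (w.getVert 0).property
        have hnot : (w.getVert 0).val ∉ D := (Finset.mem_sdiff.mp hprop).2
        rw [hf0] at hmem
        exact hnot hmem
    calc (k : ℕ∞) < ((k+1 : ℕ) : ℕ∞) := by exact_mod_cast Nat.lt_succ_self k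
      _ ≤ G'.egirth := hgirth
  · -- no homomorphism
    constructor
    intro φ
    apply hind
    have hcard1 : Fintype.card W * (a-1) < Fintype.card {x : Fin n // x ∈ Vs} := by
      rw [Fintype.card_coe]
      obtain ⟨P, hP⟩ : ∃ P : ℕ, P = c*a := ⟨_, rfl⟩
      obtain ⟨Q, hQ⟩ : ∃ Q : ℕ, Q = 2*k*r^k := ⟨_, rfl⟩
      have h2ca' : 2*P ≤ n := by
        rw [hP]
        calc 2*(c*a) = 2*c*a := by ring
          _ ≤ n := h2ca
      have hrkk' : 2*Q + 2 ≤ n := by rw [hQ]; exact hrkk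
      have hVs' : n - Q ≤ Vs.card := by rw [hQ]; exact hVscard
      have hXQ : XT n r k ω ≤ Q := by rw [hQ]; exact hX
      have hPVs : P ≤ Vs.card := by omega
      have hc2 : 2*c ≤ n := by
        have t1 : 2*c ≤ 64*c*c := by nlinarith
        have t2 : 64*c*c ≤ r := by
          rw [hrdef]
          exact Nat.le_mul_of_pos_right _ (by omega)
        omega
      have ha1 : 1 ≤ a := by
        rw [hadef]
        exact (Nat.one_le_div_iff (by omega)).mpr hc2
      calc Fintype.card W * (a-1) ≤ Fintype.card W * a := Nat.mul_le_mul_left _ (by omega)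
        _ < Fintype.card W * a + a := Nat.lt_add_of_pos_right (by omega)
        _ = c * a := by rw [hcdef]; ring
        _ ≤ Vs.card := by rw [← hP]; exact hPVs
    obtain ⟨w0, -, hw0⟩ := Finset.exists_lt_card_fiber_of_mul_lt_card_of_maps_to
      (f := φ) (s := (univ : Finset {x : Fin n // x ∈ Vs})) (t := (univ : Finset W))
      (fun x _ => Finset.mem_univ _) (by rw [Finset.card_univ, Finset.card_univ]; exact hcard1)
    set F : Finset {x : Fin n // x ∈ Vs} := univ.filter (fun v => φ v = w0) with hFdef
    have hFa : a ≤ (F.image Subtype.val).card := by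
      rw [Finset.card_image_of_injective _ Subtype.val_injective]
      omega
    obtain ⟨A, hAsub, hAcard⟩ := Finset.exists_subset_card_eq hFa
    refine ⟨A, hAcard, ?_⟩
    intro x hx y hy hxy hadj
    obtain ⟨ux, hux, rfl⟩ := Finset.mem_image.mp (hAsub hx)
    obtain ⟨uy, huy, rfl⟩ := Finset.mem_image.mp (hAsub hy)
    have hGadj : ((egG n r ω).comap (Subtype.val : {x : Fin n // x ∈ Vs} → Fin n)).Adj ux uy := hadj
    have hHadj : H.Adj (φ ux) (φ uy) := φ.map_adj hGadj
    rw [hFdef, Finset.mem_filter] at hux huy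
    rw [hux.2, huy.2] at hHadj
    exact H.loopless.irrefl w0 hHadj


end ErdosGirth
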